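/- Let X be a finite connected k-regular directed graph (every vertex has in-degree and out-degree k ≥ 1), fix x₀ ∈ V(X), and let 𝓔 be the set of Eulerian paths of X that start and end at x₀ (counted as distinct whenever they differ as sequences of vertices). Then there exists a subset 𝓔' ⊆ 𝓔 such that: (i) #𝓔' = k · ((k−1)!)^{#V(X)}; and (ii) for every path δ of length ℓ_δ starting at x₀, the number of paths in 𝓔' that extend δ is at most k · ((k−1)!)^{#V(X) − ℓ_δ/k}. -/

import Mathlib

set_option linter.unusedSectionVars false
set_option linter.unusedVariables false
set_option linter.unreachableTactic false
set_option linter.unusedTactic false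
set_option maxHeartbeats 2000000

open Finset Function


/-- `l` is an Eulerian path from `x₀` to `x₁` in the directed graph with adjacency
relation `adj`: it starts at `x₀`, ends at `x₁`, and its consecutive pairs are pairwise
distinct and are exactly the edges of the graph (each edge traversed exactly once).
Two Eulerian paths are distinct whenever they differ as sequences of vertices. -/
def IsEulerianFromTo {V : Type*} (adj : V → V → Prop) (x₀ x₁ : V) (l : List V) : Prop :=
  l.head? = some x₀ ∧ l.getLast? = some x₁ ∧
    (l.zip l.tail).Nodup ∧ ∀ p : V × V, p ∈ l.zip l.tail ↔ adj p.1 p.2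

/-- `T` (a set of directed edges of the graph `adj`) is a directed spanning tree rooted
at `x₀` with all edges directed toward `x₀`: every vertex other than `x₀` has exactly
one outgoing edge in `T`, `x₀` has none, and from every vertex there is a directed path
in `T` to `x₀`. -/
def IsSpanningTreeTo {V : Type*} (adj : V → V → Prop) (x₀ : V) (T : Set (V × V)) : Prop :=
  (∀ p ∈ T, adj p.1 p.2) ∧
    (∀ x : V, x ≠ x₀ → ∃! y : V, (x, y) ∈ T) ∧
    (∀ y : V, (x₀, y) ∉ T) ∧
    ∀ x : V, Relation.ReflTransGen (fun a c => (a, c) ∈ T) x x₀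

namespace St7

attribute [local instance] Classical.propDecidable

noncomputable section

variable {V : Type*} [Fintype V] (adj : V → V → Prop) (k : ℕ) (x₀ : V)

def outF (v : V) : Finset V := univ.filter (fun y => adj v y)
def inF (u : V) : Finset V := univ.filter (fun w => adj w u)

variable {adj k}

lemma card_outF (hreg : ∀ x : V, Nat.card {y : V // adj x y} = k ∧ Nat.card {y : V // adj y x} = k)
    (v : V) : (outF adj v).card = k := by
  have := (hreg v).1
  rwa [Nat.card_eq_fintype_card, Fintype.card_subtype] at this

lemma card_inF (hreg : ∀ x : V, Nat.card {y : V // adj x y} = k ∧ Nat.card {y : V // adj y x} = k)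
    (u : V) : (inF adj u).card = k := by
  have := (hreg u).2
  rwa [Nat.card_eq_fintype_card, Fintype.card_subtype] at this

lemma reach_back
    (hreg : ∀ x : V, Nat.card {y : V // adj x y} = k ∧ Nat.card {y : V // adj y x} = k)
    (u v : V) (h : adj u v) : Relation.ReflTransGen adj v u := by
  set S : Finset V := univ.filter (fun w => Relation.ReflTransGen adj v w) with hS
  have hSmem : ∀ w, w ∈ S ↔ Relation.ReflTransGen adj v w := by
    intro w; simp [hS]
  have hclosed : ∀ w ∈ S, ∀ z, adj w z → z ∈ S := by
    intro w hw z hz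
    exact (hSmem z).2 (((hSmem w).1 hw).tail hz)
  set Ef : Finset (V × V) := univ.filter (fun p => adj p.1 p.2 ∧ p.1 ∈ S) with hEf
  set Et : Finset (V × V) := univ.filter (fun p => adj p.1 p.2 ∧ p.2 ∈ S) with hEt
  have hsub : Ef ⊆ Et := by
    intro p hp
    simp only [hEf, hEt, mem_filter, mem_univ, true_and] at hp ⊢
    exact ⟨hp.1, hclosed _ hp.2 _ hp.1⟩
  have h1 : Ef.card = k * S.card := by
    rw [Finset.card_eq_sum_card_fiberwise (f := Prod.fst) (t := S)
      (by intro p hp; have hp' : p ∈ Ef := hp; exact (Finset.mem_filter.mp hp').2.2)]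
    rw [Finset.sum_congr rfl (fun a ha => ?_), Finset.sum_const, smul_eq_mul, mul_comm]
    have hft : Ef.filter (fun p => p.1 = a) = (outF adj a).image (fun b => (a, b)) := by
      ext p
      simp only [hEf, mem_filter, mem_univ, true_and, mem_image, outF]
      constructor
      · rintro ⟨⟨h1, _⟩, h2⟩
        exact ⟨p.2, by rw [← h2]; exact h1, by rw [← h2]⟩
      · rintro ⟨b, hb, rfl⟩
        exact ⟨⟨hb, ha⟩, rfl⟩
    rw [hft, Finset.card_image_of_injective _ (fun b c h => by simpa using h),
      card_outF hreg]
  have h2 : Et.card = k * S.card := by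
    rw [Finset.card_eq_sum_card_fiberwise (f := Prod.snd) (t := S)
      (by intro p hp; have hp' : p ∈ Et := hp; exact (Finset.mem_filter.mp hp').2.2)]
    rw [Finset.sum_congr rfl (fun a ha => ?_), Finset.sum_const, smul_eq_mul, mul_comm]
    have hft : Et.filter (fun p => p.2 = a) = (inF adj a).image (fun b => (b, a)) := by
      ext p
      simp only [hEt, mem_filter, mem_univ, true_and, mem_image, inF]
      constructor
      · rintro ⟨⟨h1, _⟩, h2⟩
        exact ⟨p.1, by rw [← h2]; exact h1, by rw [← h2]⟩
      · rintro ⟨b, hb, rfl⟩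
        exact ⟨⟨hb, ha⟩, rfl⟩
    rw [hft, Finset.card_image_of_injective _ (fun b c h => by simpa using h),
      card_inF hreg]
  have heq : Ef = Et := Finset.eq_of_subset_of_card_le hsub (le_of_eq (h2.trans h1.symm))
  have huv : (u, v) ∈ Et := by
    simp only [hEt, mem_filter, mem_univ, true_and]
    exact ⟨h, (hSmem v).2 .refl⟩
  rw [← heq] at huv
  simp only [hEf, mem_filter, mem_univ, true_and] at huv
  exact (hSmem u).1 huv.2

lemma strong
    (hreg : ∀ x : V, Nat.card {y : V // adj x y} = k ∧ Nat.card {y : V // adj y x} = k)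
    (hconn : ∀ u v : V, Relation.ReflTransGen (fun a c => adj a c ∨ adj c a) u v)
    (u v : V) : Relation.ReflTransGen adj u v := by
  induction hconn u v with
  | refl => exact .refl
  | tail _ h ih =>
    rcases h with h | h
    · exact ih.tail h
    · exact ih.trans (reach_back hreg _ _ h)

def relN (r : V → V → Prop) : ℕ → V → V → Prop
  | 0, u, v => u = v
  | (n+1), u, v => ∃ z, r u z ∧ relN r n z v

lemma rtg_relN {u v : V} (h : Relation.ReflTransGen adj u v) : ∃ n, relN adj n u v := by
  induction h using Relation.ReflTransGen.head_induction_on with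
  | refl => exact ⟨0, rfl⟩
  | head h _ ih => obtain ⟨n, hn⟩ := ih; exact ⟨n + 1, _, h, hn⟩

lemma exists_tree
    (hreg : ∀ x : V, Nat.card {y : V // adj x y} = k ∧ Nat.card {y : V // adj y x} = k)
    (hconn : ∀ u v : V, Relation.ReflTransGen (fun a c => adj a c ∨ adj c a) u v) :
    ∃ nxt : V → V, (∀ u, u ≠ x₀ → adj u (nxt u)) ∧
      ∀ (P : V → Prop), P x₀ → (∀ u, u ≠ x₀ → P (nxt u) → P u) → ∀ u, P u := by
  have hreach : ∀ u : V, ∃ n, relN adj n u x₀ := fun u => rtg_relN (strong hreg hconn u x₀)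
  set d : V → ℕ := fun u => Nat.find (hreach u) with hd
  have hd0 : ∀ u, u ≠ x₀ → ∃ z, adj u z ∧ d z < d u := by
    intro u hu
    have hspec : relN adj (d u) u x₀ := Nat.find_spec (hreach u)
    rcases hdu : d u with _ | m
    · rw [hdu] at hspec; exact absurd hspec hu
    · rw [hdu] at hspec
      obtain ⟨z, hz, hrel⟩ := hspec
      exact ⟨z, hz, lt_of_le_of_lt (Nat.find_le hrel) (by omega)⟩
  set nxtf : V → V := fun u => if h : u ≠ x₀ then (hd0 u h).choose else x₀ with hnxtf
  refine ⟨nxtf, fun u hu => ?_, ?_⟩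
  · simp only [hnxtf, dif_pos hu]
    exact (hd0 u hu).choose_spec.1
  · intro P h0 hstep u
    have key : ∀ m, ∀ u : V, d u ≤ m → P u := by
      intro m
      induction m with
      | zero =>
        intro u hu
        have hspec : relN adj (d u) u x₀ := Nat.find_spec (hreach u)
        have : d u = 0 := Nat.le_zero.mp hu
        rw [this] at hspec
        exact hspec ▸ h0
      | succ m ih =>
        intro u hu
        by_cases h : u = x₀
        · exact h ▸ h0
        · refine hstep u h (ih _ ?_)
          have : d (nxtf u) < d u := by
            simp only [hnxtf, dif_pos h]
            exact (hd0 u h).choose_spec.2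
          omega
    exact key (d u) u le_rfl

section Walk

variable (σ : V → Fin k → V) (nxt : V → V)

/-- one step of the rotor walk -/
def stepF (s : V × (V → ℕ)) : V × (V → ℕ) :=
  if h : s.2 s.1 < k then (σ s.1 ⟨s.2 s.1, h⟩, Function.update s.2 s.1 (s.2 s.1 + 1)) else s

def st (t : ℕ) : V × (V → ℕ) := (stepF σ)^[t] (x₀, fun _ => 0)

lemma st_zero : st x₀ σ 0 = (x₀, fun _ => 0) := rfl

lemma st_succ (t : ℕ) : st x₀ σ (t + 1) = stepF σ (st x₀ σ t) :=
  Function.iterate_succ_apply' _ _ _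

variable (adj) in
/-- validity of an ordering family -/
def Valid : Prop :=
  ∀ v, Function.Injective (σ v) ∧ (∀ i, adj v (σ v i)) ∧
    (∀ i : Fin k, v ≠ x₀ → (i : ℕ) = k - 1 → σ v i = nxt v)

variable {x₀ σ nxt}

lemma step_stuck {t : ℕ} (h : ¬ (st x₀ σ t).2 (st x₀ σ t).1 < k) :
    st x₀ σ (t + 1) = st x₀ σ t := by
  rw [st_succ, stepF, dif_neg h]

lemma step_go {t : ℕ} (h : (st x₀ σ t).2 (st x₀ σ t).1 < k) :
    (st x₀ σ (t + 1)).1 = σ (st x₀ σ t).1 ⟨(st x₀ σ t).2 (st x₀ σ t).1, h⟩ ∧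
    (st x₀ σ (t + 1)).2 = Function.update (st x₀ σ t).2 (st x₀ σ t).1
      ((st x₀ σ t).2 (st x₀ σ t).1 + 1) := by
  rw [st_succ, stepF, dif_pos h]
  exact ⟨rfl, rfl⟩

lemma cnt_le_k (t : ℕ) (v : V) : (st x₀ σ t).2 v ≤ k := by
  induction t with
  | zero => simp [st_zero]
  | succ t ih =>
    by_cases h : (st x₀ σ t).2 (st x₀ σ t).1 < k
    · rw [(step_go h).2, Function.update_apply]
      split
      · next he => subst he; omega
      · exact ih
    · rw [step_stuck h]; exact ih

lemma cnt_succ (t : ℕ) (v : V) :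
    (st x₀ σ t).2 v ≤ (st x₀ σ (t + 1)).2 v ∧
      (st x₀ σ (t + 1)).2 v ≤ (st x₀ σ t).2 v + 1 := by
  by_cases h : (st x₀ σ t).2 (st x₀ σ t).1 < k
  · rw [(step_go h).2, Function.update_apply]
    split
    · next he => subst he; omega
    · omega
  · rw [step_stuck h]; omega

lemma cnt_mono {t s : ℕ} (h : t ≤ s) (v : V) : (st x₀ σ t).2 v ≤ (st x₀ σ s).2 v := by
  induction s with
  | zero =>
    have ht : t = 0 := by omega
    rw [ht]
  | succ s ih =>
    rcases Nat.lt_or_ge t (s+1) with h' | h'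
    · exact le_trans (ih (by omega)) (cnt_succ s v).1
    · have ht : t = s + 1 := by omega
      rw [ht]

lemma sum_cnt_le (t : ℕ) : ∑ v, (st x₀ σ t).2 v ≤ t := by
  induction t with
  | zero => simp [st_zero]
  | succ t ih =>
    by_cases h : (st x₀ σ t).2 (st x₀ σ t).1 < k
    · rw [(step_go h).2]
      rw [Finset.sum_update_of_mem (mem_univ _)]
      rw [← Finset.sum_erase_add _ _ (mem_univ (st x₀ σ t).1), Finset.erase_eq] at ih
      omega
    · rw [step_stuck h]; omega

/-- the set of vertices `w` having already used an exit toward `u` -/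
def usedS (σ' : V → Fin k → V) (c : V → ℕ) (u : V) : Finset V :=
  univ.filter (fun w => ∃ i : Fin k, (i : ℕ) < c w ∧ σ' w i = u)

lemma usedS_card_le (hadj : ∀ v i, adj v (σ v i))
    (hreg : ∀ x : V, Nat.card {y : V // adj x y} = k ∧ Nat.card {y : V // adj y x} = k)
    (c : V → ℕ) (u : V) : (usedS σ c u).card ≤ k := by
  have hsub : usedS σ c u ⊆ inF adj u := by
    intro w hw
    simp only [usedS, mem_filter, mem_univ, true_and] at hw
    obtain ⟨i, _, hi⟩ := hw
    simp only [inF, mem_filter, mem_univ, true_and]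
    exact hi ▸ hadj w i
  exact le_of_le_of_eq (Finset.card_le_card hsub) (card_inF hreg u)

lemma invariant (hinj : ∀ v, Function.Injective (σ v)) (t : ℕ) (u : V) :
    (usedS σ (st x₀ σ t).2 u).card + (if u = x₀ then 1 else 0) =
      (st x₀ σ t).2 u + (if u = (st x₀ σ t).1 then 1 else 0) := by
  induction t with
  | zero =>
    simp only [st_zero]
    have he : usedS σ (fun _ => (0:ℕ)) u = ∅ := by
      ext w; simp [usedS]
    rw [he]; simp; by_cases hu : u = x₀ <;> simp [hu]
  | succ t ih =>
    by_cases h : (st x₀ σ t).2 (st x₀ σ t).1 < k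
    · set v := (st x₀ σ t).1 with hv
      set c := (st x₀ σ t).2 with hc
      set w := σ v ⟨c v, h⟩ with hw
      have hcur' : (st x₀ σ (t+1)).1 = w := (step_go h).1
      have hcnt' : (st x₀ σ (t+1)).2 = Function.update c v (c v + 1) := (step_go h).2
      have hcard : (usedS σ (st x₀ σ (t+1)).2 u).card =
          (usedS σ c u).card + (if u = w then 1 else 0) := by
        rw [hcnt']
        by_cases hu : u = w
        · subst hu
          have hins : usedS σ (Function.update c v (c v + 1)) w = insert v (usedS σ c w) := by
            ext w'
            simp only [usedS, mem_filter, mem_univ, true_and, mem_insert]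
            by_cases hw' : w' = v
            · subst hw'
              simp only [Function.update_self, true_or, iff_true]
              exact ⟨⟨c v, h⟩, Nat.lt_succ_self _, rfl⟩
            · rw [Function.update_of_ne hw' _ _]
              constructor
              · intro hh; right; exact hh
              · rintro (hh | hh)
                · exact absurd hh hw'
                · exact hh
          have hnot : v ∉ usedS σ c w := by
            simp only [usedS, mem_filter, mem_univ, true_and, not_exists]
            rintro i ⟨hi, hieq⟩
            have h2 := hinj v (hieq.trans hw)
            have : (i : ℕ) = c v := congrArg Fin.val h2
            omega
          rw [hins, Finset.card_insert_of_notMem hnot, if_pos rfl]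
        · have hsame : usedS σ (Function.update c v (c v + 1)) u = usedS σ c u := by
            ext w'
            simp only [usedS, mem_filter, mem_univ, true_and]
            by_cases hw' : w' = v
            · subst hw'
              rw [Function.update_self]
              constructor
              · rintro ⟨i, hi, hieq⟩
                refine ⟨i, ?_, hieq⟩
                rcases Nat.lt_or_ge (i : ℕ) (c v) with h' | h'
                · exact h'
                · exfalso
                  apply hu
                  have hik : (i : Fin k) = ⟨c v, h⟩ := by
                    apply Fin.ext
                    show (i : ℕ) = c v
                    omega
                  rw [← hieq, hik]
              · rintro ⟨i, hi, hieq⟩; exact ⟨i, by omega, hieq⟩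
            · rw [Function.update_of_ne hw' _ _]
          rw [hsame, if_neg hu]
          exact (Nat.add_zero _).symm
      rw [hcard, hcur', hcnt', Function.update_apply]
      by_cases h1 : u = v <;> by_cases h2 : u = w <;> by_cases h3 : u = x₀ <;>
        simp only [h1, h2, h3, if_pos, if_neg, if_true, if_false] at ih ⊢ <;>
        clear hv hc hw hcur' hcnt' hcard <;> simp_all <;> omega
    · rw [step_stuck h]; exact ih

lemma not_stuck_of_ne (hinj : ∀ v, Function.Injective (σ v))
    (hadj : ∀ v i, adj v (σ v i))
    (hreg : ∀ x : V, Nat.card {y : V // adj x y} = k ∧ Nat.card {y : V // adj y x} = k)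
    (t : ℕ) (h : (st x₀ σ t).1 ≠ x₀) : (st x₀ σ t).2 (st x₀ σ t).1 < k := by
  have hi := invariant (x₀ := x₀) hinj t (st x₀ σ t).1
  rw [if_neg h, if_pos rfl] at hi
  have hle := usedS_card_le hadj hreg (st x₀ σ t).2 (st x₀ σ t).1
  omega

lemma exists_exit (T : ℕ) (v : V) (i : ℕ) (hi : i < (st x₀ σ T).2 v) :
    ∃ t < T, (st x₀ σ t).1 = v ∧ (st x₀ σ t).2 v = i := by
  induction T with
  | zero => simp [st_zero] at hi
  | succ T ih =>
    by_cases hlt : i < (st x₀ σ T).2 v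
    · obtain ⟨t, ht, h1, h2⟩ := ih hlt
      exact ⟨t, by omega, h1, h2⟩
    · by_cases h : (st x₀ σ T).2 (st x₀ σ T).1 < k
      · have hgo := (step_go h).2
        by_cases hv : (st x₀ σ T).1 = v
        · refine ⟨T, by omega, hv, ?_⟩
          rw [hgo, ← hv, Function.update_self] at hi
          rw [← hv] at hlt ⊢
          omega
        · rw [hgo, Function.update_of_ne (fun hh => hv hh.symm) _ _] at hi
          omega
      · rw [step_stuck h] at hi
        omega

lemma stuck_all
    (hval : Valid adj x₀ σ nxt)
    (hreg : ∀ x : V, Nat.card {y : V // adj x y} = k ∧ Nat.card {y : V // adj y x} = k)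
    (hnxt : ∀ u, u ≠ x₀ → adj u (nxt u))
    (htree : ∀ (P : V → Prop), P x₀ → (∀ u, u ≠ x₀ → P (nxt u) → P u) → ∀ u, P u)
    (hk : 1 ≤ k) {t : ℕ}
    (h : ¬ (st x₀ σ t).2 (st x₀ σ t).1 < k) : ∀ v, (st x₀ σ t).2 v = k := by
  have hinj : ∀ v, Function.Injective (σ v) := fun v => (hval v).1
  have hadj : ∀ v i, adj v (σ v i) := fun v => (hval v).2.1
  have hcur : (st x₀ σ t).1 = x₀ := by
    by_contra hc
    exact h (not_stuck_of_ne hinj hadj hreg t hc)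
  have hbal : ∀ u, (usedS σ (st x₀ σ t).2 u).card = (st x₀ σ t).2 u := by
    intro u
    have hi := invariant (x₀ := x₀) hinj t u
    rw [hcur] at hi
    by_cases hu : u = x₀
    · subst hu; simp only [if_pos rfl] at hi; omega
    · simp only [if_neg hu] at hi; omega
  refine htree (fun v => (st x₀ σ t).2 v = k) ?_ ?_
  · rw [hcur] at h
    have := cnt_le_k (σ := σ) (x₀ := x₀) t x₀
    omega
  · intro u hu ihu
    have hcard : (usedS σ (st x₀ σ t).2 (nxt u)).card = k := by rw [hbal, ihu]
    have hsub : usedS σ (st x₀ σ t).2 (nxt u) ⊆ inF adj (nxt u) := by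
      intro w hw
      simp only [usedS, mem_filter, mem_univ, true_and] at hw
      obtain ⟨i, _, hi⟩ := hw
      simp only [inF, mem_filter, mem_univ, true_and]
      exact hi ▸ hadj w i
    have heq : usedS σ (st x₀ σ t).2 (nxt u) = inF adj (nxt u) :=
      Finset.eq_of_subset_of_card_le hsub (le_of_eq ((card_inF hreg (nxt u)).trans hcard.symm))
    have humem : u ∈ usedS σ (st x₀ σ t).2 (nxt u) := by
      rw [heq]
      simp only [inF, mem_filter, mem_univ, true_and]
      exact hnxt u hu
    simp only [usedS, mem_filter, mem_univ, true_and] at humem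
    obtain ⟨i, hilt, hieq⟩ := humem
    have hlast : σ u ⟨k - 1, by omega⟩ = nxt u := (hval u).2.2 ⟨k - 1, by omega⟩ hu rfl
    have : i = ⟨k - 1, by omega⟩ := hinj u (hieq.trans hlast.symm)
    have hiv : (i : ℕ) = k - 1 := by rw [this]
    have := cnt_le_k (σ := σ) (x₀ := x₀) t u
    omega

lemma sum_cnt_eq (T : ℕ) (hns : ∀ t < T, (st x₀ σ t).2 (st x₀ σ t).1 < k) :
    ∑ v, (st x₀ σ T).2 v = T := by
  induction T with
  | zero => simp [st_zero]
  | succ T ih =>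
    have h := hns T (by omega)
    rw [(step_go h).2, Finset.sum_update_of_mem (mem_univ _)]
    have ihh := ih (fun t ht => hns t (by omega))
    rw [← Finset.sum_erase_add _ _ (mem_univ (st x₀ σ T).1), Finset.erase_eq] at ihh
    omega

section Final

variable (hval : Valid adj x₀ σ nxt)
    (hreg : ∀ x : V, Nat.card {y : V // adj x y} = k ∧ Nat.card {y : V // adj y x} = k)
    (hnxt : ∀ u, u ≠ x₀ → adj u (nxt u))
    (htree : ∀ (P : V → Prop), P x₀ → (∀ u, u ≠ x₀ → P (nxt u) → P u) → ∀ u, P u)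
    (hk : 1 ≤ k)

include hval hreg hnxt htree hk

lemma no_stuck (t : ℕ) (ht : t < k * Fintype.card V) :
    (st x₀ σ t).2 (st x₀ σ t).1 < k := by
  by_contra h
  have hall := stuck_all hval hreg hnxt htree hk h
  have hsum : ∑ v, (st x₀ σ t).2 v = k * Fintype.card V := by
    rw [Finset.sum_congr rfl (fun v _ => hall v), Finset.sum_const, card_univ, smul_eq_mul,
      mul_comm]
  have := sum_cnt_le (σ := σ) (x₀ := x₀) t
  omega

lemma cnt_N (v : V) : (st x₀ σ (k * Fintype.card V)).2 v = k := by
  have hsum : ∑ v, (st x₀ σ (k * Fintype.card V)).2 v = k * Fintype.card V :=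
    sum_cnt_eq _ (fun t ht => no_stuck hval hreg hnxt htree hk t ht)
  by_contra hne
  have hlt : (st x₀ σ (k * Fintype.card V)).2 v < k :=
    lt_of_le_of_ne (cnt_le_k _ _) hne
  have : ∑ v, (st x₀ σ (k * Fintype.card V)).2 v < ∑ _v : V, k :=
    Finset.sum_lt_sum (fun i _ => cnt_le_k _ _) ⟨v, mem_univ v, hlt⟩
  rw [Finset.sum_const, card_univ, smul_eq_mul] at this
  rw [show Fintype.card V * k = k * Fintype.card V from mul_comm _ _] at this
  omega

lemma cur_N : (st x₀ σ (k * Fintype.card V)).1 = x₀ := by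
  by_contra h
  have h1 := not_stuck_of_ne (fun v => (hval v).1) (fun v => (hval v).2.1) hreg _ h
  have h2 := cnt_N hval hreg hnxt htree hk (st x₀ σ (k * Fintype.card V)).1
  omega

end Final

end Walk



section Lists

lemma cons_map_range {α : Type*} (g : ℕ → α) (m : ℕ) :
    (List.range (m+1)).map g = g 0 :: (List.range m).map (fun t => g (t+1)) := by
  rw [List.range_succ_eq_map, List.map_cons, List.map_map]
  rfl

lemma zip_tail_map_range {α : Type*} : ∀ (m : ℕ) (g : ℕ → α),
    (((List.range (m+1)).map g).zip (((List.range (m+1)).map g).tail)) =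
      (List.range m).map (fun t => (g t, g (t+1)))
  | 0, g => by simp [List.range_succ]
  | (m+1), g => by
    have ih := zip_tail_map_range m (fun t => g (t+1))
    rw [cons_map_range (fun t => g (t+1)) m, List.tail_cons] at ih
    rw [cons_map_range g (m+1), cons_map_range (fun t => g (t+1)) m, List.tail_cons,
      List.zip_cons_cons, ih, cons_map_range (fun t => (g t, g (t+1))) m]

end Lists

section WalkList

variable {σ : V → Fin k → V} {nxt : V → V}
variable {x₀}

variable (x₀ σ) in
def W : List V := (List.range (k * Fintype.card V + 1)).map (fun t => (st x₀ σ t).1)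

lemma W_length : (W x₀ σ).length = k * Fintype.card V + 1 := by
  simp [W]

lemma W_zip : (W x₀ σ).zip (W x₀ σ).tail =
    (List.range (k * Fintype.card V)).map
      (fun t => ((st x₀ σ t).1, (st x₀ σ (t+1)).1)) :=
  zip_tail_map_range _ _

lemma W_getElem (t : ℕ) (ht : t < k * Fintype.card V + 1) :
    (W x₀ σ)[t]'(by rw [W_length]; exact ht) = (st x₀ σ t).1 := by
  simp [W]

lemma exit_eq {t : ℕ} (h : (st x₀ σ t).2 (st x₀ σ t).1 < k) :
    ∃ i : Fin k, ((i : ℕ) = (st x₀ σ t).2 (st x₀ σ t).1) ∧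
      (st x₀ σ (t+1)).1 = σ (st x₀ σ t).1 i :=
  ⟨⟨_, h⟩, rfl, (step_go h).1⟩

lemma sigma_surj (hinj : ∀ v, Function.Injective (σ v)) (hadj : ∀ v i, adj v (σ v i))
    (hreg : ∀ x : V, Nat.card {y : V // adj x y} = k ∧ Nat.card {y : V // adj y x} = k)
    (a b : V) (hb : adj a b) : ∃ i : Fin k, σ a i = b := by
  set f : Fin k → {y : V // adj a y} := fun i => ⟨σ a i, hadj a i⟩ with hf
  have hfinj : Function.Injective f := by
    intro i j h
    exact hinj a (congrArg Subtype.val h)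
  have hcard : Fintype.card (Fin k) = Fintype.card {y : V // adj a y} := by
    rw [Fintype.card_fin, ← Nat.card_eq_fintype_card, (hreg a).1]
  have hbij : Function.Bijective f :=
    (Fintype.bijective_iff_injective_and_card f).2 ⟨hfinj, hcard⟩
  obtain ⟨i, hi⟩ := hbij.2 ⟨b, hb⟩
  exact ⟨i, congrArg Subtype.val hi⟩

section EulerMain

variable (hval : Valid adj x₀ σ nxt)
    (hreg : ∀ x : V, Nat.card {y : V // adj x y} = k ∧ Nat.card {y : V // adj y x} = k)
    (hnxt : ∀ u, u ≠ x₀ → adj u (nxt u))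
    (htree : ∀ (P : V → Prop), P x₀ → (∀ u, u ≠ x₀ → P (nxt u) → P u) → ∀ u, P u)
    (hk : 1 ≤ k)

include hval hreg hnxt htree hk

lemma pair_inj_aux {t s : ℕ} (ht : t < k * Fintype.card V) (hs : s < k * Fintype.card V)
    (hts : t < s)
    (h1 : (st x₀ σ t).1 = (st x₀ σ s).1)
    (h2 : (st x₀ σ (t+1)).1 = (st x₀ σ (s+1)).1) : False := by
  have hnst := no_stuck hval hreg hnxt htree hk t ht
  have hnss := no_stuck hval hreg hnxt htree hk s hs
  obtain ⟨i, hi, hieq⟩ := exit_eq hnst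
  obtain ⟨j, hj, hjeq⟩ := exit_eq hnss
  rw [← h1] at hjeq
  rw [hieq, hjeq] at h2
  have hij : i = j := (hval _).1 h2
  have hcs : (st x₀ σ s).2 (st x₀ σ t).1 = (st x₀ σ s).2 (st x₀ σ s).1 := by rw [h1]
  have hct : (st x₀ σ (t+1)).2 (st x₀ σ t).1 = (st x₀ σ t).2 (st x₀ σ t).1 + 1 := by
    rw [(step_go hnst).2, Function.update_self]
  have hmono := cnt_mono (σ := σ) (x₀ := x₀) (show t + 1 ≤ s by omega) (st x₀ σ t).1
  have hijv : (i : ℕ) = (j : ℕ) := congrArg Fin.val hij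
  omega

lemma eulerW : IsEulerianFromTo adj x₀ x₀ (W x₀ σ) := by
  refine ⟨?_, ?_, ?_, ?_⟩
  · rw [W, cons_map_range]
    simp [st_zero]
  · have hcur := cur_N hval hreg hnxt htree hk
    rw [W, List.range_succ, List.map_append]
    simp [hcur]
  · rw [W_zip]
    refine List.Nodup.map_on ?_ List.nodup_range
    intro t ht s hs hpair
    rw [List.mem_range] at ht hs
    have h1 : (st x₀ σ t).1 = (st x₀ σ s).1 := (Prod.ext_iff.mp hpair).1
    have h2 : (st x₀ σ (t+1)).1 = (st x₀ σ (s+1)).1 := (Prod.ext_iff.mp hpair).2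
    rcases lt_trichotomy t s with hlt | heq | hgt
    · exact absurd (pair_inj_aux hval hreg hnxt htree hk ht hs hlt h1 h2) id
    · exact heq
    · exact absurd (pair_inj_aux hval hreg hnxt htree hk hs ht hgt h1.symm h2.symm) id
  · intro p
    rw [W_zip]
    constructor
    · intro hp
      rw [List.mem_map] at hp
      obtain ⟨t, htm, hpe⟩ := hp
      rw [List.mem_range] at htm
      have hns := no_stuck hval hreg hnxt htree hk t htm
      obtain ⟨i, hi, hieq⟩ := exit_eq hns
      rw [← hpe]
      simp only [hieq]
      exact (hval _).2.1 _
    · intro hp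
      obtain ⟨i, hi⟩ := sigma_surj (fun v => (hval v).1) (fun v => (hval v).2.1) hreg
        p.1 p.2 hp
      have hik : (i : ℕ) < (st x₀ σ (k * Fintype.card V)).2 p.1 := by
        rw [cnt_N hval hreg hnxt htree hk]
        exact i.isLt
      obtain ⟨t, htm, hcv, hcnt⟩ := exists_exit _ _ _ hik
      rw [List.mem_map]
      refine ⟨t, List.mem_range.mpr htm, ?_⟩
      have hns := no_stuck hval hreg hnxt htree hk t htm
      obtain ⟨i', hi', hieq'⟩ := exit_eq hns
      have hii : i' = i := by
        apply Fin.ext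
        rw [hi', hcv]
        exact hcnt
      have : (st x₀ σ (t+1)).1 = p.2 := by
        rw [hieq', hcv, hii, hi]
      rw [hcv, this]

end EulerMain

lemma states_eq {σ' : V → Fin k → V} (T : ℕ)
    (hcur : ∀ t ≤ T, (st x₀ σ t).1 = (st x₀ σ' t).1) :
    ∀ t ≤ T, st x₀ σ t = st x₀ σ' t := by
  intro t
  induction t with
  | zero => intro _; rfl
  | succ t ih =>
    intro ht
    have hst := ih (by omega)
    by_cases h : (st x₀ σ t).2 (st x₀ σ t).1 < k
    · have h' : (st x₀ σ' t).2 (st x₀ σ' t).1 < k := by rw [← hst]; exact h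
      have e1 := (step_go h).2
      have e2 := (step_go h').2
      refine Prod.ext ?_ ?_
      · exact (hcur (t+1) ht)
      · rw [e1, e2, hst]
    · have h' : ¬ (st x₀ σ' t).2 (st x₀ σ' t).1 < k := by rw [← hst]; exact h
      rw [step_stuck h, step_stuck h', hst]

lemma sigma_eq_up_to {σ' : V → Fin k → V} (T : ℕ)
    (hcur : ∀ t ≤ T, (st x₀ σ t).1 = (st x₀ σ' t).1)
    (hinj : ∀ v, Function.Injective (σ v))
    (v : V) (i : Fin k) (hi : (i : ℕ) < (st x₀ σ T).2 v) : σ v i = σ' v i := by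
  obtain ⟨t, htT, hcv, hcnt⟩ := exists_exit T v (i : ℕ) hi
  have hns : (st x₀ σ t).2 (st x₀ σ t).1 < k := by rw [hcv, hcnt]; exact i.isLt
  obtain ⟨i₁, hi₁, he₁⟩ := exit_eq hns
  have hstates := states_eq T hcur t (le_of_lt htT)
  have hns' : (st x₀ σ' t).2 (st x₀ σ' t).1 < k := by rw [← hstates]; exact hns
  obtain ⟨i₂, hi₂, he₂⟩ := exit_eq (σ := σ') hns'
  have hi₁v : i₁ = i := Fin.ext (by rw [hi₁, hcv]; exact hcnt)
  have hi₂v : i₂ = i := Fin.ext (by rw [hi₂, ← hstates, hcv]; exact hcnt)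
  have hcv' : (st x₀ σ' t).1 = v := by rw [← hstates]; exact hcv
  have e1 : σ v i = (st x₀ σ (t+1)).1 := by rw [he₁, hcv, hi₁v]
  have e2 : σ' v i = (st x₀ σ' (t+1)).1 := by rw [he₂, hcv', hi₂v]
  rw [e1, e2]
  exact hcur (t+1) htT

lemma prefix_cur {δ : List V} (hpre : δ <+: W x₀ σ) {t : ℕ} (ht : t < δ.length) :
    δ[t]'ht = (st x₀ σ t).1 := by
  have hlen : δ.length ≤ k * Fintype.card V + 1 := by
    have := hpre.length_le
    rwa [W_length] at this
  rw [hpre.getElem ht]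
  exact W_getElem t (by omega)

end WalkList

section Counting

noncomputable def embEquiv (p : V → Prop) (α : Type) [Fintype α] :
    {f : α → V // Function.Injective f ∧ ∀ i, p (f i)} ≃ (α ↪ {y : V // p y}) :=
  { toFun := fun f => ⟨fun i => ⟨f.1 i, f.2.2 i⟩, fun i j h => f.2.1 (congrArg Subtype.val h)⟩
    invFun := fun g => ⟨fun i => (g i).1, fun i j h => g.injective (Subtype.ext h),
      fun i => (g i).2⟩
    left_inv := fun f => rfl
    right_inv := fun g => rfl }

lemma card_inj_subtype (p : V → Prop) (n : ℕ) (hn : Nat.card {y : V // p y} = n) (m : ℕ) :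
    Nat.card {f : Fin m → V // Function.Injective f ∧ ∀ i, p (f i)} = n.descFactorial m := by
  have hc : Fintype.card {y : V // p y} = n := by rw [← Nat.card_eq_fintype_card, hn]
  rw [Nat.card_congr (embEquiv p (Fin m)), Nat.card_eq_fintype_card,
    Fintype.card_embedding_eq, Fintype.card_fin, hc]

noncomputable def snocEquiv (m : ℕ) (p : V → Prop) (a : V) (ha : p a) :
    {f : Fin (m+1) → V // Function.Injective f ∧ (∀ i, p (f i)) ∧ f (Fin.last m) = a} ≃
    {g : Fin m → V // Function.Injective g ∧ ∀ i, p (g i) ∧ g i ≠ a} := by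
  refine
    { toFun := fun f => ⟨fun i => f.1 i.castSucc,
        fun i j h => Fin.castSucc_injective m (f.2.1 h),
        fun i => ⟨f.2.2.1 _, fun h => absurd (f.2.1 (h.trans f.2.2.2.symm))
          (Fin.castSucc_lt_last i).ne⟩⟩
      invFun := fun g => ⟨Fin.snoc g.1 a, ?_, ?_, Fin.snoc_last _ _⟩
      left_inv := ?_
      right_inv := ?_ }
  · intro i j h
    rcases Fin.eq_castSucc_or_eq_last i with ⟨i', rfl⟩ | rfl <;>
      rcases Fin.eq_castSucc_or_eq_last j with ⟨j', rfl⟩ | rfl <;>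
      simp only [Fin.snoc_castSucc, Fin.snoc_last] at h
    · rw [g.2.1 h]
    · exact absurd h (g.2.2 i').2
    · exact absurd h.symm (g.2.2 j').2
    · rfl
  · intro i
    rcases Fin.eq_castSucc_or_eq_last i with ⟨i', rfl⟩ | rfl
    · rw [Fin.snoc_castSucc]; exact (g.2.2 i').1
    · rw [Fin.snoc_last]; exact ha
  · intro f
    apply Subtype.ext
    funext i
    rcases Fin.eq_castSucc_or_eq_last i with ⟨i', rfl⟩ | rfl
    · simp [Fin.snoc_castSucc]
    · simp only [Fin.snoc_last]
      exact f.2.2.2.symm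
  · intro g
    apply Subtype.ext
    funext i
    simp [Fin.snoc_castSucc]

lemma card_inj_pinned (m : ℕ) (p : V → Prop) (a : V) (ha : p a) (n : ℕ)
    (hn : Nat.card {y : V // p y ∧ y ≠ a} = n) :
    Nat.card {f : Fin (m+1) → V // Function.Injective f ∧ (∀ i, p (f i)) ∧
      f (Fin.last m) = a} = n.descFactorial m := by
  rw [Nat.card_congr (snocEquiv m p a ha)]
  exact card_inj_subtype (fun y => p y ∧ y ≠ a) n hn m

lemma card_subtype_and_ne (p : V → Prop) (a : V) (hpa : p a) (n : ℕ)
    (hn : Nat.card {y : V // p y} = n) :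
    Nat.card {y : V // p y ∧ y ≠ a} = n - 1 := by
  rw [Nat.card_eq_fintype_card, Fintype.card_subtype] at hn ⊢
  have he : univ.filter (fun y => p y ∧ y ≠ a) = (univ.filter p).erase a := by
    ext y
    simp only [mem_filter, mem_univ, true_and, Finset.mem_erase]
    tauto
  rw [he, Finset.card_erase_of_mem (by simp [hpa]), hn]

lemma card_inj_le (c : ℕ) (p : V → Prop) (hcard : Nat.card {y : V // p y} ≤ c) :
    Nat.card {g : Fin c → V // Function.Injective g ∧ ∀ j, p (g j)} ≤ c.factorial := by
  rw [card_inj_subtype p (Nat.card {y : V // p y}) rfl c]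
  calc (Nat.card {y : V // p y}).descFactorial c ≤ c.descFactorial c :=
        Nat.descFactorial_le c hcard
    _ = c.factorial := Nat.descFactorial_self c

lemma card_pinned_le (m : ℕ) (p : V → Prop) (a : V)
    (hcard : Nat.card {y : V // p y ∧ y ≠ a} ≤ m) :
    Nat.card {g : Fin (m+1) → V // Function.Injective g ∧ (∀ j, p (g j)) ∧
      (∀ j : Fin (m+1), (j : ℕ) = m → g j = a)} ≤ m.factorial := by
  by_cases hpa : p a
  · have he : {g : Fin (m+1) → V // Function.Injective g ∧ (∀ j, p (g j)) ∧
        (∀ j : Fin (m+1), (j : ℕ) = m → g j = a)} ≃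
        {g : Fin (m+1) → V // Function.Injective g ∧ (∀ j, p (g j)) ∧ g (Fin.last m) = a} := by
      refine Equiv.subtypeEquivRight (fun g => ?_)
      constructor
      · rintro ⟨h1, h2, h3⟩
        exact ⟨h1, h2, h3 (Fin.last m) (Fin.val_last m)⟩
      · rintro ⟨h1, h2, h3⟩
        refine ⟨h1, h2, fun j hj => ?_⟩
        have : j = Fin.last m := Fin.ext (by rw [hj, Fin.val_last])
        rw [this]; exact h3
    rw [Nat.card_congr he,
      card_inj_pinned m p a hpa (Nat.card {y : V // p y ∧ y ≠ a}) rfl]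
    calc (Nat.card {y : V // p y ∧ y ≠ a}).descFactorial m ≤ m.descFactorial m :=
          Nat.descFactorial_le m hcard
      _ = m.factorial := Nat.descFactorial_self m
  · have : IsEmpty {g : Fin (m+1) → V // Function.Injective g ∧ (∀ j, p (g j)) ∧
        (∀ j : Fin (m+1), (j : ℕ) = m → g j = a)} := by
      refine ⟨fun g => hpa ?_⟩
      have := g.2.2.2 (Fin.last m) (Fin.val_last m)
      rw [← this]
      exact g.2.2.1 _
    rw [Nat.card_of_isEmpty]
    exact Nat.zero_le _

lemma keyNat (m o : ℕ) (ho : o ≤ m + 1) :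
    ((m - o).factorial) ^ (m + 1) ≤ (m.factorial) ^ (m + 1 - o) := by
  rcases Nat.lt_or_ge o (m+1) with h | h
  · set s := m - o with hs
    have hso : s + o = m := by omega
    have h1 : s.factorial * (s+1)^o ≤ m.factorial := by
      have := Nat.factorial_mul_pow_le_factorial (m := s) (n := o)
      rwa [hso] at this
    have h2 : s.factorial ≤ (s+1)^(s+1) :=
      le_trans (Nat.factorial_le_pow s)
        (le_trans (Nat.pow_le_pow_left (by omega) s) (Nat.pow_le_pow_right (by omega) (by omega)))
    calc (s.factorial)^(m+1) = (s.factorial)^(s+1) * (s.factorial)^o := by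
          rw [← pow_add]; congr 1; omega
      _ ≤ (s.factorial)^(s+1) * ((s+1)^(s+1))^o :=
          Nat.mul_le_mul_left _ (Nat.pow_le_pow_left h2 o)
      _ = (s.factorial)^(s+1) * ((s+1)^o)^(s+1) := by
          rw [← pow_mul, ← pow_mul, mul_comm (s+1) o]
      _ = (s.factorial * (s+1)^o)^(s+1) := (mul_pow _ _ _).symm
      _ ≤ (m.factorial)^(s+1) := Nat.pow_le_pow_left h1 _
      _ = (m.factorial)^(m+1-o) := by congr 1; omega
  · have hoe : o = m + 1 := by omega
    subst hoe
    have h0 : m - (m+1) = 0 := by omega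
    rw [h0, Nat.sub_self]
    simp

lemma real_bound (k o : ℕ) (hk : 1 ≤ k) (ho : o ≤ k) :
    ((k - 1 - o).factorial : ℝ) ≤ ((k - 1).factorial : ℝ) ^ (((k - o : ℕ) : ℝ) / (k : ℝ)) := by
  set m := k - 1 with hm
  have hkm : k - 1 - o = m - o := rfl
  have hkey : ((m - o).factorial) ^ k ≤ (m.factorial) ^ (k - o) := by
    have h := keyNat m o (by omega)
    have hm1 : m + 1 = k := by omega
    rwa [hm1] at h
  have hcast : (((m - o).factorial : ℝ)) ^ (k : ℕ) ≤ ((m.factorial : ℝ)) ^ ((k - o : ℕ)) := by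
    exact_mod_cast hkey
  have hx0 : (0:ℝ) ≤ ((m - o).factorial : ℝ) := by positivity
  have ha0 : (0:ℝ) ≤ (m.factorial : ℝ) := by positivity
  have hk0 : (0:ℝ) < (k : ℝ) := by exact_mod_cast hk
  rw [hkm]
  calc ((m - o).factorial : ℝ)
      = (((m - o).factorial : ℝ) ^ (k : ℕ)) ^ ((k : ℝ)⁻¹) := by
        rw [← Real.rpow_natCast ((m - o).factorial : ℝ) k, ← Real.rpow_mul hx0,
          mul_inv_cancel₀ (ne_of_gt hk0), Real.rpow_one]
    _ ≤ (((m.factorial : ℝ)) ^ ((k - o : ℕ))) ^ ((k : ℝ)⁻¹) :=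
        Real.rpow_le_rpow (by positivity) hcast (by positivity)
    _ = (m.factorial : ℝ) ^ (((k - o : ℕ) : ℝ) * (k : ℝ)⁻¹) := by
        rw [← Real.rpow_natCast (m.factorial : ℝ) (k - o), ← Real.rpow_mul ha0]
    _ = (m.factorial : ℝ) ^ (((k - o : ℕ) : ℝ) / (k : ℝ)) := by
        rw [div_eq_mul_inv]

end Counting

end
end St7

/-- Proposition: in a finite connected `k`-regular directed graph (`k ≥ 1`), for any
vertex `x₀` there is a set `𝓔'` of Eulerian paths from `x₀` to `x₀` with
`#𝓔' = k·((k−1)!)^{#V}` such that for every path `δ` starting at `x₀`, of length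
`ℓ_δ = δ.length − 1`, the number of paths in `𝓔'` extending `δ` is at most
`k·((k−1)!)^{#V − ℓ_δ/k}`. -/
theorem statement7 (V : Type*) [Fintype V] (adj : V → V → Prop) (k : ℕ) (hk : 1 ≤ k)
    (hreg : ∀ x : V, Nat.card {y : V // adj x y} = k ∧ Nat.card {y : V // adj y x} = k)
    (hconn : ∀ u v : V, Relation.ReflTransGen (fun a c => adj a c ∨ adj c a) u v)
    (x₀ : V) :
    ∃ E' : Set (List V),
      (∀ l ∈ E', IsEulerianFromTo adj x₀ x₀ l) ∧
      Nat.card E' = k * Nat.factorial (k - 1) ^ Fintype.card V ∧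
      ∀ δ : List V, δ.head? = some x₀ → δ.Chain' adj →
        (Nat.card {l : List V // l ∈ E' ∧ δ <+: l} : ℝ) ≤
          (k : ℝ) * (Nat.factorial (k - 1) : ℝ) ^
            ((Fintype.card V : ℝ) - ((δ.length : ℝ) - 1) / (k : ℝ)) := by
  classical
  obtain ⟨nxt, hnxt, htree⟩ := St7.exists_tree x₀ hreg hconn
  set N := k * Fintype.card V with hN
  set Ord := {σ : V → Fin k → V // St7.Valid adj x₀ σ nxt} with hOrd
  set Φ : Ord → List V := fun σp => St7.W x₀ σp.1 with hΦ
  have hWinj : Function.Injective Φ := by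
    intro σp σq h
    apply Subtype.ext
    funext v i
    have hcur : ∀ t ≤ N, (St7.st x₀ σp.1 t).1 = (St7.st x₀ σq.1 t).1 := by
      intro t ht
      have h1 := St7.W_getElem (σ := σp.1) (x₀ := x₀) t (by omega)
      have h2 := St7.W_getElem (σ := σq.1) (x₀ := x₀) t (by omega)
      rw [← h1, ← h2]
      exact List.getElem_of_eq h _
    exact St7.sigma_eq_up_to N hcur (fun v => (σp.2 v).1) v i
      (by rw [St7.cnt_N σp.2 hreg hnxt htree hk v]; exact i.isLt)
  refine ⟨Set.range Φ, ?_, ?_, ?_⟩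
  · rintro l ⟨σp, rfl⟩
    exact St7.eulerW σp.2 hreg hnxt htree hk
  · -- cardinality
    rw [Nat.card_range_of_injective hWinj]
    have e0 : Ord ≃ {σ : V → Fin k → V // ∀ v, Function.Injective (σ v) ∧ (∀ i, adj v (σ v i)) ∧
        (∀ i : Fin k, v ≠ x₀ → (i : ℕ) = k - 1 → σ v i = nxt v)} :=
      Equiv.subtypeEquivRight (fun σ => Iff.rfl)
    have e1 : {σ : V → Fin k → V // ∀ v, Function.Injective (σ v) ∧ (∀ i, adj v (σ v i)) ∧
        (∀ i : Fin k, v ≠ x₀ → (i : ℕ) = k - 1 → σ v i = nxt v)} ≃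
        ∀ v : V, {f : Fin k → V // Function.Injective f ∧ (∀ i, adj v (f i)) ∧
          (∀ i : Fin k, v ≠ x₀ → (i : ℕ) = k - 1 → f i = nxt v)} :=
      Equiv.subtypePiEquivPi (p := fun v (f : Fin k → V) => Function.Injective f ∧
        (∀ i, adj v (f i)) ∧ (∀ i : Fin k, v ≠ x₀ → (i : ℕ) = k - 1 → f i = nxt v))
    rw [Nat.card_congr (e0.trans e1), Nat.card_pi]
    have hcardv : ∀ v : V, Nat.card {f : Fin k → V // Function.Injective f ∧
        (∀ i, adj v (f i)) ∧ (∀ i : Fin k, v ≠ x₀ → (i : ℕ) = k - 1 → f i = nxt v)} =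
        if v = x₀ then k.factorial else (k-1).factorial := by
      intro v
      by_cases hv : v = x₀
      · rw [if_pos hv]
        have e2 : {f : Fin k → V // Function.Injective f ∧ (∀ i, adj v (f i)) ∧
            (∀ i : Fin k, v ≠ x₀ → (i : ℕ) = k - 1 → f i = nxt v)} ≃
            {f : Fin k → V // Function.Injective f ∧ ∀ i, adj v (f i)} :=
          Equiv.subtypeEquivRight (fun f =>
            ⟨fun h => ⟨h.1, h.2.1⟩, fun h => ⟨h.1, h.2, fun i hx _ => absurd hv hx⟩⟩)
        rw [Nat.card_congr e2,
          St7.card_inj_subtype (fun y => adj v y) k (hreg v).1 k, Nat.descFactorial_self]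
      · rw [if_neg hv]
        obtain ⟨m, hm⟩ : ∃ m, k = m + 1 := ⟨k - 1, by omega⟩
        subst hm
        have e2 : {f : Fin (m+1) → V // Function.Injective f ∧ (∀ i, adj v (f i)) ∧
            (∀ i : Fin (m+1), v ≠ x₀ → (i : ℕ) = m + 1 - 1 → f i = nxt v)} ≃
            {f : Fin (m+1) → V // Function.Injective f ∧ (∀ i, adj v (f i)) ∧
              f (Fin.last m) = nxt v} :=
          Equiv.subtypeEquivRight (fun f => by
            constructor
            · rintro ⟨h1, h2, h3⟩
              exact ⟨h1, h2, h3 (Fin.last m) hv (by simp)⟩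
            · rintro ⟨h1, h2, h3⟩
              refine ⟨h1, h2, fun i _ hi => ?_⟩
              have hil : i = Fin.last m := Fin.ext (by rw [hi]; simp)
              rw [hil]; exact h3)
        have hcc : Nat.card {y : V // adj v y ∧ y ≠ nxt v} = (m+1) - 1 :=
          St7.card_subtype_and_ne (fun y => adj v y) (nxt v) (hnxt v hv) (m+1) (hreg v).1
        rw [Nat.card_congr e2,
          St7.card_inj_pinned m (fun y => adj v y) (nxt v) (hnxt v hv) ((m+1)-1) hcc]
        simp [Nat.descFactorial_self]
    rw [Finset.prod_congr rfl (fun v _ => hcardv v)]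
    rw [← Finset.mul_prod_erase Finset.univ _ (Finset.mem_univ x₀), if_pos rfl]
    have hprod : (∏ v ∈ Finset.univ.erase x₀,
        (if v = x₀ then k.factorial else (k-1).factorial)) =
        (k-1).factorial ^ (Fintype.card V - 1) := by
      rw [Finset.prod_congr rfl (fun v hv => if_neg (Finset.mem_erase.mp hv).1),
        Finset.prod_const, Finset.card_erase_of_mem (Finset.mem_univ _), Finset.card_univ]
    rw [hprod]
    have hk1 : k.factorial = k * (k-1).factorial := by
      conv_lhs => rw [show k = (k-1)+1 by omega]
      rw [Nat.factorial_succ]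
      congr 1
      omega
    have hn1 : 1 ≤ Fintype.card V := Fintype.card_pos_iff.mpr ⟨x₀⟩
    rw [hk1, mul_assoc]
    congr 1
    rw [show Fintype.card V = (Fintype.card V - 1) + 1 by omega, pow_succ',
      Nat.add_sub_cancel]
  · -- prefix bound
    intro δ hδ0 _hδchain
    have hfact1 : (1:ℝ) ≤ ((k-1).factorial : ℝ) := by
      exact_mod_cast Nat.one_le_iff_ne_zero.mpr (Nat.factorial_ne_zero (k-1))
    have hfact0 : (0:ℝ) < ((k-1).factorial : ℝ) := by linarith
    have hRpos : (0:ℝ) ≤ (k : ℝ) * ((k-1).factorial : ℝ) ^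
        ((Fintype.card V : ℝ) - ((δ.length : ℝ) - 1) / (k : ℝ)) := by positivity
    rcases isEmpty_or_nonempty {σp : Ord // δ <+: Φ σp} with hBe | hBne
    · have hAe : IsEmpty {l : List V // l ∈ Set.range Φ ∧ δ <+: l} := by
        constructor
        rintro ⟨l, ⟨σp, rfl⟩, hpre⟩
        exact hBe.false ⟨σp, hpre⟩
      rw [Nat.card_of_isEmpty, Nat.cast_zero]
      exact hRpos
    · have hAB : Nat.card {l : List V // l ∈ Set.range Φ ∧ δ <+: l} ≤
          Nat.card {σp : Ord // δ <+: Φ σp} := by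
        apply Nat.card_le_card_of_surjective
          (fun b : {σp : Ord // δ <+: Φ σp} =>
            (⟨Φ b.1, ⟨b.1, rfl⟩, b.2⟩ : {l : List V // l ∈ Set.range Φ ∧ δ <+: l}))
        rintro ⟨l, ⟨σp, rfl⟩, hpre⟩
        exact ⟨⟨σp, hpre⟩, rfl⟩
      obtain ⟨⟨⟨σs, hσs⟩, hpres⟩⟩ := hBne
      have hδne : δ ≠ [] := fun h => by simp [h] at hδ0
      have hδpos : 1 ≤ δ.length := List.length_pos_iff.mpr hδne
      set L := δ.length - 1 with hL
      have hδlen : δ.length = L + 1 := by omega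
      have hlenW : δ.length ≤ N + 1 := by
        have := hpres.length_le
        rwa [St7.W_length] at this
      have hLN : L ≤ N := by omega
      set o : V → ℕ := fun v => (St7.st x₀ σs L).2 v with ho
      have ho_le : ∀ v, o v ≤ k := fun v => St7.cnt_le_k L v
      have hsum_o : ∑ v, o v = L :=
        St7.sum_cnt_eq L (fun t ht => St7.no_stuck hσs hreg hnxt htree hk t (by omega))
      have hcurδ : ∀ (σ : V → Fin k → V), δ <+: St7.W x₀ σ →
          ∀ t (ht : t ≤ L), (St7.st x₀ σ t).1 = δ[t]'(by omega) := by
        intro σ hpre t ht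
        exact (St7.prefix_cur hpre (by omega : t < δ.length)).symm
      have hstatesB : ∀ (σp : Ord), δ <+: Φ σp →
          ∀ t ≤ L, St7.st x₀ σp.1 t = St7.st x₀ σs t := by
        intro σp hpre t ht
        refine St7.states_eq L (fun t' ht' => ?_) t ht
        rw [hcurδ σp.1 hpre t' ht', hcurδ σs hpres t' ht']
      -- values determined below o v
      have hearly : ∀ (σp : Ord), δ <+: Φ σp → ∀ v (i : Fin k), (i : ℕ) < o v →
          σp.1 v i = σs v i := by
        intro σp hpre v i hi
        refine St7.sigma_eq_up_to L
          (fun t' ht' => congrArg Prod.fst (hstatesB σp hpre t' ht'))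
          (fun v => (σp.2 v).1) v i ?_
        rw [congrArg Prod.snd (hstatesB σp hpre L le_rfl)]
        exact hi
      set p : V → V → Prop :=
        fun v y => adj v y ∧ ∀ i : Fin k, (i : ℕ) < o v → σs v i ≠ y with hp
      have hSv : ∀ v, Nat.card {y : V // p v y} ≤ k - o v := by
        intro v
        rw [Nat.card_eq_fintype_card, Fintype.card_subtype]
        set D : Finset V :=
          ((Finset.univ : Finset (Fin k)).filter (fun i : Fin k => (i : ℕ) < o v)).image (σs v) with hD
        have hDsub : D ⊆ St7.outF adj v := by
          intro y hy
          rw [hD, Finset.mem_image] at hy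
          obtain ⟨i, _, rfl⟩ := hy
          simp only [St7.outF, Finset.mem_filter, Finset.mem_univ, true_and]
          exact (hσs v).2.1 i
        have hfil : ((Finset.univ : Finset (Fin k)).filter (fun i : Fin k => (i : ℕ) < o v)).card
            = o v := by
          rw [← Finset.card_image_of_injective
            ((Finset.univ : Finset (Fin k)).filter (fun i : Fin k => (i : ℕ) < o v)) Fin.val_injective]
          have : ((Finset.univ : Finset (Fin k)).filter
              (fun i : Fin k => (i : ℕ) < o v)).image Fin.val = Finset.range (o v) := by
            ext n
            simp only [Finset.mem_image, Finset.mem_filter, Finset.mem_univ, true_and,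
              Finset.mem_range]
            constructor
            · rintro ⟨i, hi, rfl⟩; exact hi
            · intro hn
              exact ⟨⟨n, by have := ho_le v; omega⟩, hn, rfl⟩
          rw [this, Finset.card_range]
        have hDcard : D.card = o v := by
          rw [hD, Finset.card_image_of_injOn (fun a _ b _ h => (hσs v).1 h), hfil]
        have hsub2 : Finset.univ.filter (fun y => p v y) ⊆ (St7.outF adj v) \ D := by
          intro y hy
          rw [Finset.mem_filter] at hy
          obtain ⟨-, hadjy, havoid⟩ := hy
          rw [Finset.mem_sdiff]
          constructor
          · simp only [St7.outF, Finset.mem_filter, Finset.mem_univ, true_and]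
            exact hadjy
          · intro hyD
            rw [hD, Finset.mem_image] at hyD
            obtain ⟨i, hi, hie⟩ := hyD
            rw [Finset.mem_filter] at hi
            exact havoid i hi.2 hie
        calc (Finset.univ.filter (fun y => p v y)).card
            ≤ ((St7.outF adj v) \ D).card := Finset.card_le_card hsub2
          _ = (St7.outF adj v).card - D.card := Finset.card_sdiff_of_subset hDsub
          _ = k - o v := by rw [St7.card_outF hreg v, hDcard]
      -- the target product type
      set T : V → Type _ := fun v => {g : Fin (k - o v) → V // Function.Injective g ∧
        (∀ j, p v (g j)) ∧ (∀ j : Fin (k - o v), v ≠ x₀ → o v + (j : ℕ) = k - 1 →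
          g j = nxt v)} with hT
      have hoj : ∀ v (j : Fin (k - o v)), o v + (j : ℕ) < k := by
        intro v j
        have := j.isLt
        have := ho_le v
        omega
      set Ψ : {σp : Ord // δ <+: Φ σp} → ∀ v, T v := fun σp v =>
        ⟨fun j => σp.1.1 v ⟨o v + (j : ℕ), hoj v j⟩, by
          refine ⟨?_, ?_, ?_⟩
          · intro j j' hjj
            have h1 := (σp.1.2 v).1 hjj
            have h2 : o v + (j : ℕ) = o v + (j' : ℕ) := congrArg Fin.val h1
            exact Fin.ext (by omega)
          · intro j
            constructor
            · exact (σp.1.2 v).2.1 _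
            · intro i hi hieq
              have hear : σp.1.1 v i = σs v i := hearly σp.1 σp.2 v i hi
              rw [← hear] at hieq
              have h1 := (σp.1.2 v).1 hieq
              have h2 : (i : ℕ) = o v + (j : ℕ) := congrArg Fin.val h1
              omega
          · intro j hvx hoj'
            exact (σp.1.2 v).2.2 ⟨o v + (j : ℕ), hoj v j⟩ hvx hoj'⟩ with hΨ
      have hΨinj : Function.Injective Ψ := by
        intro σp σq h
        apply Subtype.ext
        apply Subtype.ext
        funext v i
        rcases Nat.lt_or_ge (i : ℕ) (o v) with hio | hio
        · rw [hearly σp.1 σp.2 v i hio, hearly σq.1 σq.2 v i hio]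
        · have hj : (i : ℕ) - o v < k - o v := by
            have := i.isLt
            omega
          have happ := congrFun (congrArg Subtype.val (congrFun h v)) ⟨(i : ℕ) - o v, hj⟩
          simp only [hΨ] at happ
          have hidx : (⟨o v + ((i : ℕ) - o v), hoj v ⟨(i : ℕ) - o v, hj⟩⟩ : Fin k) = i :=
            Fin.ext (by simp; omega)
          rwa [hidx] at happ
      have hcardBT : Nat.card {σp : Ord // δ <+: Φ σp} ≤
          ∏ v, (if v = x₀ then (k - o v).factorial else (k - 1 - o v).factorial) := by
        calc Nat.card {σp : Ord // δ <+: Φ σp} ≤ Nat.card (∀ v, T v) :=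
              Nat.card_le_card_of_injective Ψ hΨinj
          _ = ∏ v, Nat.card (T v) := Nat.card_pi
          _ ≤ _ := by
              refine Finset.prod_le_prod (fun v _ => Nat.zero_le _) (fun v _ => ?_)
              by_cases hv : v = x₀
              · rw [if_pos hv]
                have hmap : Function.Injective (fun (g : T v) =>
                    (⟨g.1, g.2.1, g.2.2.1⟩ :
                      {g' : Fin (k - o v) → V // Function.Injective g' ∧
                        ∀ j, p v (g' j)})) := by
                  intro a b hab
                  apply Subtype.ext
                  have h := congrArg Subtype.val hab
                  exact h
                refine le_trans (Nat.card_le_card_of_injective _ hmap) ?_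
                exact St7.card_inj_le (k - o v) (p v) (hSv v)
              · rw [if_neg hv]
                rcases Nat.lt_or_ge (o v) k with hov | hov
                · obtain ⟨m, hm⟩ : ∃ m, k - o v = m + 1 := ⟨k - o v - 1, by omega⟩
                  have hmap : Function.Injective (fun (g : T v) =>
                      (⟨fun j => g.1 (Fin.cast hm.symm j), by
                        refine ⟨?_, ?_, ?_⟩
                        · intro j j' hjj
                          have h1 := g.2.1 hjj
                          have h2 := congrArg Fin.val h1
                          exact Fin.ext h2
                        · intro j
                          exact g.2.2.1 _
                        · intro j hjm
                          refine g.2.2.2 _ hv ?_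
                          show o v + (j : ℕ) = k - 1
                          omega⟩ :
                      {g' : Fin (m+1) → V // Function.Injective g' ∧
                        (∀ j, p v (g' j)) ∧
                        (∀ j : Fin (m+1), (j : ℕ) = m → g' j = nxt v)})) := by
                    intro a b hab
                    apply Subtype.ext
                    funext jj
                    have := congrFun (congrArg Subtype.val hab) (Fin.cast hm jj)
                    simpa using this
                  refine le_trans (Nat.card_le_card_of_injective _ hmap) ?_
                  have hpa : p v (nxt v) := by
                    constructor
                    · exact hnxt v hv
                    · intro i hi hieq
                      have hlast : σs v ⟨k - 1, by omega⟩ = nxt v :=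
                        (hσs v).2.2 ⟨k - 1, by omega⟩ hv rfl
                      have h1 := (hσs v).1 (hieq.trans hlast.symm)
                      have h2 : (i : ℕ) = k - 1 := congrArg Fin.val h1
                      omega
                  have hcard' : Nat.card {y : V // p v y ∧ y ≠ nxt v} ≤ m := by
                    have h1 : Nat.card {y : V // p v y ∧ y ≠ nxt v} =
                        Nat.card {y : V // p v y} - 1 :=
                      St7.card_subtype_and_ne (p v) (nxt v) hpa _ rfl
                    have h2 := hSv v
                    omega
                  refine le_trans (St7.card_pinned_le m (p v) (nxt v) hcard') ?_
                  rw [show k - 1 - o v = m by omega]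
                · have h0 : k - o v = 0 := by omega
                  have hle1 : Nat.card (T v) ≤ 1 := by
                    refine le_trans
                      (Nat.card_le_card_of_injective (Subtype.val : T v → (Fin (k - o v) → V))
                        Subtype.val_injective) ?_
                    rw [Nat.card_eq_fintype_card, Fintype.card_fun, h0]
                    simp
                  have h2 : k - 1 - o v = 0 := by omega
                  rw [h2, Nat.factorial_zero]
                  exact hle1
      -- pass from the if-product to k * ∏ factorial
      have hx0f : (k - o x₀).factorial ≤ k * (k - 1 - o x₀).factorial := by
        rcases Nat.lt_or_ge (o x₀) k with h | h
        · rw [show k - o x₀ = (k - 1 - o x₀) + 1 by omega, Nat.factorial_succ]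
          exact Nat.mul_le_mul_right _ (by omega)
        · have h1 : k - o x₀ = 0 := by omega
          have h2 : k - 1 - o x₀ = 0 := by omega
          rw [h1, h2]
          simpa using hk
      have hstep2 : (∏ v, (if v = x₀ then (k - o v).factorial
          else (k - 1 - o v).factorial)) ≤ k * ∏ v, (k - 1 - o v).factorial := by
        rw [← Finset.mul_prod_erase Finset.univ _ (Finset.mem_univ x₀),
          ← Finset.mul_prod_erase Finset.univ (fun v => (k - 1 - o v).factorial)
            (Finset.mem_univ x₀), if_pos rfl]
        have hcongr : (∏ v ∈ Finset.univ.erase x₀,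
            (if v = x₀ then (k - o v).factorial else (k - 1 - o v).factorial)) =
            ∏ v ∈ Finset.univ.erase x₀, (k - 1 - o v).factorial :=
          Finset.prod_congr rfl (fun v hv => if_neg (Finset.mem_erase.mp hv).1)
        rw [hcongr, ← mul_assoc]
        exact Nat.mul_le_mul_right _ hx0f
      -- real bound
      have hk0 : (0:ℝ) < (k : ℝ) := by exact_mod_cast hk
      have hexp : ∑ v : V, (((k - o v : ℕ) : ℝ) / (k : ℝ)) =
          (Fintype.card V : ℝ) - (L : ℝ) / (k : ℝ) := by
        rw [← Finset.sum_div]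
        have h1 : ∑ v : V, ((k - o v : ℕ) : ℝ) = (Fintype.card V : ℝ) * k - L := by
          have h2 : ∀ v : V, ((k - o v : ℕ) : ℝ) = (k : ℝ) - (o v : ℝ) := fun v =>
            Nat.cast_sub (ho_le v)
          rw [Finset.sum_congr rfl (fun v _ => h2 v), Finset.sum_sub_distrib,
            Finset.sum_const, Finset.card_univ, nsmul_eq_mul]
          have h3 : ∑ v : V, ((o v : ℝ)) = (L : ℝ) := by
            rw [← Nat.cast_sum, hsum_o]
          rw [h3]
        rw [h1]
        field_simp
      have hrealprod : (∏ v, ((k - 1 - o v).factorial : ℝ)) ≤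
          ((k-1).factorial : ℝ) ^ ((Fintype.card V : ℝ) - (L : ℝ) / (k : ℝ)) := by
        calc (∏ v, ((k - 1 - o v).factorial : ℝ))
            ≤ ∏ v, ((k-1).factorial : ℝ) ^ (((k - o v : ℕ) : ℝ) / (k : ℝ)) :=
              Finset.prod_le_prod (fun v _ => by positivity)
                (fun v _ => St7.real_bound k (o v) hk (ho_le v))
          _ = ((k-1).factorial : ℝ) ^ (∑ v : V, (((k - o v : ℕ) : ℝ) / (k : ℝ))) :=
              (Real.rpow_sum_of_pos hfact0 _ _).symm
          _ = _ := by rw [hexp]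
      have hlen1 : ((δ.length : ℝ) - 1) = (L : ℝ) := by
        rw [hδlen]
        push_cast
        ring
      rw [hlen1]
      calc ((Nat.card {l : List V // l ∈ Set.range Φ ∧ δ <+: l} : ℕ) : ℝ)
          ≤ ((Nat.card {σp : Ord // δ <+: Φ σp} : ℕ) : ℝ) := by exact_mod_cast hAB
        _ ≤ ((k * ∏ v, (k - 1 - o v).factorial : ℕ) : ℝ) := by
            exact_mod_cast le_trans hcardBT hstep2
        _ = (k : ℝ) * ∏ v, ((k - 1 - o v).factorial : ℝ) := by
            push_cast
            ring
        _ ≤ (k : ℝ) * ((k-1).factorial : ℝ) ^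
            ((Fintype.card V : ℝ) - (L : ℝ) / (k : ℝ)) := by
            have := mul_le_mul_of_nonneg_left hrealprod (le_of_lt hk0)
            exact this
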